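/- Let A be a commutative domain equipped with an ℕ-grading A = ⊕_{i≥0} A_i (a graded ring structure), let x ∈ A_1 be a nonzero homogeneous element of degree 1, and let n ≥ 1 be an integer. Let K be the fraction field of A, and let K' ⊆ K be the subfield generated by the image of the n-th Veronese subring A^{(n)}. Then the images in K of the powers 1, x, x^2, …, x^{n-1} form a basis of K as a K'-vector space; in particular [K : K'] = n. -/

import Mathlib

open DirectSum

section aux

variable {A : Type*} [CommRing A] (𝒜 : ℕ → AddSubgroup A) [GradedRing 𝒜] (n : ℕ)

/-- The Veronese subring `A^{(n)}` as a subring. -/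
def veroneseSubring : Subring A where
  carrier := {a : A | ∀ i : ℕ, ¬ n ∣ i → (DirectSum.decompose 𝒜 a i : A) = 0}
  zero_mem' := fun i _ => by simp
  one_mem' := fun i hi =>
    DirectSum.decompose_of_mem_ne 𝒜 SetLike.GradedOne.one_mem
      (fun h => hi (h ▸ dvd_zero n))
  add_mem' := fun {a b} ha hb i hi => by
    rw [DirectSum.decompose_add, DirectSum.add_apply, AddSubgroup.coe_add, ha i hi, hb i hi,
      add_zero]
  neg_mem' := fun {a} ha i hi => by
    have : DirectSum.decompose 𝒜 (-a) = -DirectSum.decompose 𝒜 a :=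
      map_neg (DirectSum.decomposeAddEquiv 𝒜) a
    rw [this, DFinsupp.neg_apply, AddSubgroup.coe_neg, ha i hi, neg_zero]
  mul_mem' := by
    classical
    intro a b ha hb d hd
    rw [DirectSum.decompose_mul, DirectSum.coe_mul_apply]
    apply Finset.sum_eq_zero
    rintro ⟨i, j⟩ hij
    simp only [Finset.mem_filter, Finset.mem_product] at hij
    by_cases hni : n ∣ i
    · have hnj : ¬ n ∣ j := fun h => hd (hij.2 ▸ dvd_add hni h)
      have : (DirectSum.decompose 𝒜 b j : A) = 0 := hb j hnj
      rw [show ((DirectSum.decompose 𝒜 b) j : A) = 0 from this] at *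
      simp [this]
    · have : (DirectSum.decompose 𝒜 a i : A) = 0 := ha i hni
      simp [this]

theorem mem_veroneseSubring_iff {a : A} :
    a ∈ veroneseSubring 𝒜 n ↔ ∀ i : ℕ, ¬ n ∣ i → (DirectSum.decompose 𝒜 a i : A) = 0 :=
  Iff.rfl

/-- A homogeneous element of degree divisible by `n` lies in the Veronese subring. -/
theorem hom_mem_veronese {m : ℕ} (hm : n ∣ m) {a : A} (ha : a ∈ 𝒜 m) :
    a ∈ veroneseSubring 𝒜 n :=
  fun i hi => DirectSum.decompose_of_mem_ne 𝒜 ha (fun h => hi (h ▸ hm))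

end aux

/-- Key independence at the level of `A`: if `∑ c_j x^j = 0` with `c_j` in the Veronese
subring and `j < n`, then all `c_j = 0`. -/
theorem veronese_coeffs_eq_zero {A : Type*} [CommRing A] [IsDomain A]
    (𝒜 : ℕ → AddSubgroup A) [GradedRing 𝒜]
    {x : A} (hx1 : x ∈ 𝒜 1) (hx0 : x ≠ 0) {n : ℕ}
    (c : Fin n → A) (hc : ∀ j, c j ∈ veroneseSubring 𝒜 n)
    (h : ∑ j : Fin n, c j * x ^ (j : ℕ) = 0) : ∀ j, c j = 0 := by
  classical
  have hxp : ∀ k : ℕ, x ^ k ∈ 𝒜 k := fun k => by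
    simpa using SetLike.pow_mem_graded k hx1
  intro j
  have hcomp : ∀ e : ℕ, (DirectSum.decompose 𝒜 (c j) e : A) = 0 := by
    intro e
    by_cases hne : n ∣ e
    · have hsum : (DirectSum.decompose 𝒜 (∑ i : Fin n, c i * x ^ (i : ℕ)) (e + (j : ℕ)) : A)
          = ∑ i : Fin n, (DirectSum.decompose 𝒜 (c i * x ^ (i : ℕ)) (e + (j : ℕ)) : A) := by
        rw [DirectSum.decompose_sum, DFinsupp.finset_sum_apply,
          AddSubmonoidClass.coe_finset_sum]
      have h0 : (DirectSum.decompose 𝒜 (∑ i : Fin n, c i * x ^ (i : ℕ)) (e + (j : ℕ)) : A)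
          = 0 := by rw [h]; simp
      have hterm : ∀ i : Fin n, i ∈ Finset.univ → i ≠ j →
          (DirectSum.decompose 𝒜 (c i * x ^ (i : ℕ)) (e + (j : ℕ)) : A) = 0 := by
        intro i _ hij
        by_cases hle : (i : ℕ) ≤ e + (j : ℕ)
        · rw [DirectSum.coe_decompose_mul_of_right_mem_of_le 𝒜 (hxp i) hle]
          have hnd : ¬ n ∣ (e + (j : ℕ) - (i : ℕ)) := by
            rintro ⟨u, hu⟩
            obtain ⟨v, hv⟩ := hne
            have h5 : e + (j : ℕ) = n * u + (i : ℕ) := by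
              rw [← hu]; exact (Nat.sub_add_cancel hle).symm
            have h6 : e + (j : ℕ) = n * v + (j : ℕ) := by rw [hv]
            have hmod : (i : ℕ) % n = (j : ℕ) % n := by
              rw [← Nat.mul_add_mod n u (i : ℕ), ← h5, h6, Nat.mul_add_mod]
            rw [Nat.mod_eq_of_lt i.2, Nat.mod_eq_of_lt j.2] at hmod
            exact hij (Fin.ext hmod)
          rw [hc i _ hnd, zero_mul]
        · exact DirectSum.coe_decompose_mul_of_right_mem_of_not_le 𝒜 (hxp i) hle
      have h1 : (DirectSum.decompose 𝒜 (c j * x ^ (j : ℕ)) (e + (j : ℕ)) : A) = 0 := by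
        have h2 := Finset.sum_eq_single (s := Finset.univ)
          (f := fun i : Fin n => (DirectSum.decompose 𝒜 (c i * x ^ (i : ℕ)) (e + (j : ℕ)) : A))
          j hterm (fun hj => absurd (Finset.mem_univ j) hj)
        simp only at h2
        rw [← h2, ← hsum, h0]
      have h3 : (DirectSum.decompose 𝒜 (c j) (e + (j : ℕ) - (j : ℕ)) : A) * x ^ (j : ℕ) = 0 := by
        rw [← DirectSum.coe_decompose_mul_of_right_mem_of_le 𝒜 (hxp j) (Nat.le_add_left _ _), h1]
      rw [Nat.add_sub_cancel] at h3
      rcases mul_eq_zero.mp h3 with h4 | h4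
      · exact h4
      · exact absurd h4 (pow_ne_zero _ hx0)
    · exact hc j e hne
  rw [← DirectSum.sum_support_decompose 𝒜 (c j)]
  exact Finset.sum_eq_zero fun e _ => hcomp e


/-- Let `A` be an ℕ-graded commutative domain, `x` a nonzero homogeneous element
of degree `1` and `n ≥ 1`.  Let `K` be the fraction field of `A` and `K'` the
subfield of `K` generated by the image of the `n`-th Veronese subring
`A^{(n)} = {a | a has nonzero homogeneous components only in degrees divisible by n}`.
Then `1, x, …, x^{n-1}` is a basis of `K` over `K'`; in particular `[K : K'] = n`. -/
theorem basis_powers_fractionRing_over_veronese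
    (A : Type*) [CommRing A] [IsDomain A]
    (𝒜 : ℕ → AddSubgroup A) [GradedRing 𝒜]
    (x : A) (hx1 : x ∈ 𝒜 1) (hx0 : x ≠ 0) (n : ℕ) (hn : 1 ≤ n)
    (K' : Subfield (FractionRing A))
    (hK' : K' = Subfield.closure
      (algebraMap A (FractionRing A) ''
        {a : A | ∀ i : ℕ, ¬ n ∣ i → (DirectSum.decompose 𝒜 a i : A) = 0})) :
    (∃ b : Module.Basis (Fin n) K' (FractionRing A),
        ∀ i : Fin n, b i = algebraMap A (FractionRing A) x ^ (i : ℕ)) ∧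
      Module.finrank K' (FractionRing A) = n := by
  classical
  set K := FractionRing A
  set φ : A →+* K := (algebraMap A K : A →+* K) with hφdef
  set V : Subring A := veroneseSubring 𝒜 n with hVdef
  have hsetV : {a : A | ∀ i : ℕ, ¬ n ∣ i → (DirectSum.decompose 𝒜 a i : A) = 0}
      = (V : Set A) := rfl
  have hφinj : Function.Injective φ := IsFractionRing.injective A K
  set X : K := φ x with hXdef
  have hX0 : X ≠ 0 := fun h => hx0 (hφinj (by rw [map_zero]; exact h))
  have hxp : ∀ k : ℕ, x ^ k ∈ 𝒜 k := fun k => by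
    simpa using SetLike.pow_mem_graded k hx1
  -- membership in K'
  have hK'mem : ∀ a : A, a ∈ V → φ a ∈ K' := by
    intro a ha
    rw [hK', hsetV]
    exact Subfield.subset_closure ⟨a, ha, rfl⟩
  have hxnV : x ^ n ∈ V := hom_mem_veronese 𝒜 n (dvd_refl n) (hxp n)
  have hXnK' : (X : K) ^ n ∈ K' := by
    have : φ (x ^ n) ∈ K' := hK'mem _ hxnV
    rwa [map_pow] at this
  -- the candidate spanning submodule
  set v : Fin n → K := fun i => X ^ (i : ℕ) with hvdef
  set S : Submodule K' K := Submodule.span K' (Set.range v) with hSdef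
  have hsmul : ∀ (c : K') (y : K), c • y = (c : K) * y := fun c y => rfl
  have hscale : ∀ c : K, c ∈ K' → ∀ r : ℕ, r < n → c * X ^ r ∈ S := by
    intro c hc r hr
    have := Submodule.smul_mem S ⟨c, hc⟩ (Submodule.subset_span ⟨⟨r, hr⟩, rfl⟩)
    rwa [hsmul] at this
  -- closure under multiplication
  have hmulS : ∀ y ∈ S, ∀ z ∈ S, y * z ∈ S := by
    have hSS : S * S ≤ S := by
      rw [hSdef, Submodule.span_mul_span, Submodule.span_le]
      rintro w ⟨-, ⟨i, rfl⟩, -, ⟨j, rfl⟩, rfl⟩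
      show v i * v j ∈ S
      rw [hvdef]
      simp only
      rw [← pow_add]
      rcases lt_or_ge ((i : ℕ) + (j : ℕ)) n with hlt | hge
      · exact Submodule.subset_span ⟨⟨_, hlt⟩, rfl⟩
      · have hr : (i : ℕ) + (j : ℕ) - n < n := by
          have := i.2; have := j.2; omega
        have hE : X ^ ((i : ℕ) + (j : ℕ)) = X ^ n * X ^ ((i : ℕ) + (j : ℕ) - n) := by
          rw [← pow_add]; congr 1; omega
        rw [hE]
        exact hscale _ hXnK' _ hr
    intro y hy z hz
    exact hSS (Submodule.mul_mem_mul hy hz)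
  have h1S : (1 : K) ∈ S := by
    have := hscale 1 (Subfield.one_mem K') 0 hn
    simpa using this
  -- image of A is contained in S
  have hhom : ∀ (d : ℕ) (a : A), a ∈ 𝒜 d → φ a ∈ S := by
    intro d a ha
    by_cases hdvd : n ∣ d
    · have haV : a ∈ V := hom_mem_veronese 𝒜 n hdvd ha
      have := hscale (φ a) (hK'mem a haV) 0 hn
      simpa using this
    · have h2 : d % n < n := Nat.mod_lt _ (by omega)
      have hdm := Nat.div_add_mod d n
      set r : ℕ := d % n with hrdef
      set k : ℕ := n - r with hkdef
      have hdk : n ∣ d + k := by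
        refine ⟨d / n + 1, ?_⟩
        calc d + k = n * (d / n) + r + (n - r) := by rw [hdm]
          _ = n * (d / n) + n := by
              rw [add_assoc, Nat.add_sub_cancel' (Nat.le_of_lt h2)]
          _ = n * (d / n + 1) := by ring
      have haxk : a * x ^ k ∈ 𝒜 (d + k) := SetLike.mul_mem_graded ha (hxp k)
      have haxkV : a * x ^ k ∈ V := hom_mem_veronese 𝒜 n hdk haxk
      have hcK' : φ (a * x ^ k) * (X ^ n)⁻¹ ∈ K' :=
        Subfield.mul_mem _ (hK'mem _ haxkV) (Subfield.inv_mem _ hXnK')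
      have hkr : k + r = n := Nat.sub_add_cancel (Nat.le_of_lt h2)
      have hXn0 : X ^ n ≠ 0 := pow_ne_zero _ hX0
      have heq : φ (a * x ^ k) * (X ^ n)⁻¹ * X ^ r = φ a := by
        have hc : φ (a * x ^ k) = φ a * X ^ k := by rw [map_mul, map_pow]
        calc φ (a * x ^ k) * (X ^ n)⁻¹ * X ^ r
            = φ a * (X ^ k * X ^ r) * (X ^ n)⁻¹ := by rw [hc]; ring
          _ = φ a * X ^ n * (X ^ n)⁻¹ := by rw [← pow_add, hkr]
          _ = φ a := by rw [mul_assoc, mul_inv_cancel₀ hXn0, mul_one]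
      rw [← heq]
      exact hscale _ hcK' r h2
  have hA : ∀ a : A, φ a ∈ S := by
    intro a
    rw [← DirectSum.sum_support_decompose 𝒜 a, map_sum]
    exact Submodule.sum_mem _ fun i _ => hhom i _ (SetLike.coe_mem _)
  -- finite dimensionality and inverses
  set Salg : Subalgebra K' K := S.toSubalgebra h1S (fun a b ha hb => hmulS a ha b hb)
    with hSalgdef
  have hFG : (Subalgebra.toSubmodule Salg).FG :=
    show (Submodule.span K' (Set.range v)).FG from Submodule.fg_span (Set.finite_range v)
  have hinv : ∀ y : K, y ∈ S → y⁻¹ ∈ S := by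
    intro y hy
    have hint : IsIntegral K' y := IsIntegral.of_mem_of_fg Salg hFG y hy
    have := Subalgebra.inv_mem_of_algebraic (A := Salg) (x := ⟨y, hy⟩)
      (hint.isAlgebraic)
    exact this
  have hspan : ⊤ ≤ S := by
    intro z _
    obtain ⟨a, b, hb, rfl⟩ := IsFractionRing.div_surjective (A := A) z
    rw [div_eq_mul_inv]
    exact hmulS _ (hA a) _ (hinv _ (hA b))
  -- linear independence
  have hli : LinearIndependent K' v := by
    rw [Fintype.linearIndependent_iff]
    intro g hg
    have hg' : ∑ i : Fin n, ((g i : K) * X ^ (i : ℕ)) = 0 := hg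
    -- representations of the coefficients
    have hcl : Subring.closure (φ '' (V : Set A)) = V.map φ := by
      rw [← Subring.coe_map, Subring.closure_eq]
    have hrep : ∀ i : Fin n, ∃ a b : A, a ∈ V ∧ b ∈ V ∧ b ≠ 0 ∧
        (g i : K) * φ b = φ a := by
      intro i
      by_cases h0 : g i = 0
      · exact ⟨0, 1, V.zero_mem, V.one_mem, one_ne_zero, by
          rw [h0, map_zero, map_one]; simp⟩
      · have hK'' : K' = Subfield.closure (φ '' (V : Set A)) := by rw [hK', hsetV]
        have hgi : (g i : K) ∈ Subfield.closure (φ '' (V : Set A)) :=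
          (SetLike.ext_iff.mp hK'' ((g i : K))).mp (g i).2
        rw [Subfield.mem_closure_iff] at hgi
        obtain ⟨y, hy, z, hz, hyz⟩ := hgi
        rw [hcl] at hy hz
        obtain ⟨a0, ha0, rfl⟩ := hy
        obtain ⟨b0, hb0, rfl⟩ := hz
        have hz0 : φ b0 ≠ 0 := by
          intro hh
          apply h0
          apply Subtype.ext
          rw [show ((g i : K)) = φ a0 / φ b0 from hyz.symm, hh, div_zero]
          rfl
        refine ⟨a0, b0, ha0, hb0, fun hh => hz0 (by rw [hh, map_zero]), ?_⟩
        rw [← hyz, div_mul_cancel₀ _ hz0]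
    choose a b haV hbV hb0 heq using hrep
    have hbne : ∀ i : Fin n, φ (b i) ≠ 0 := fun i hh =>
      hb0 i (hφinj (by rw [hh, map_zero]))
    -- multiply the relation by ∏ φ (b j)
    set c : Fin n → A := fun i => a i * ∏ k ∈ Finset.univ.erase i, b k with hcdef
    have hcapp : ∀ i : Fin n, c i = a i * ∏ k ∈ Finset.univ.erase i, b k := fun i => rfl
    have hcV : ∀ i, c i ∈ V := fun i =>
      V.mul_mem (haV i) (Subring.prod_mem V fun k _ => hbV k)
    have hkey : ∑ i : Fin n, c i * x ^ (i : ℕ) = 0 := by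
      apply hφinj
      rw [map_sum, map_zero]
      have hterm : ∀ i : Fin n,
          φ (c i * x ^ (i : ℕ)) = ((g i : K) * X ^ (i : ℕ)) * φ (∏ k : Fin n, b k) := by
        intro i
        have hP : (∏ k : Fin n, b k) = b i * ∏ k ∈ Finset.univ.erase i, b k :=
          (Finset.mul_prod_erase Finset.univ b (Finset.mem_univ i)).symm
        rw [hcapp i, map_mul, map_mul, map_pow, hP, map_mul, ← heq i]
        ring
      calc ∑ i : Fin n, φ (c i * x ^ (i : ℕ))
          = ∑ i : Fin n, ((g i : K) * X ^ (i : ℕ)) * φ (∏ k : Fin n, b k) := by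
            exact Finset.sum_congr rfl fun i _ => hterm i
        _ = (∑ i : Fin n, ((g i : K) * X ^ (i : ℕ))) * φ (∏ k : Fin n, b k) := by
            rw [Finset.sum_mul]
        _ = 0 := by rw [hg', zero_mul]
    have hc0 := veronese_coeffs_eq_zero 𝒜 hx1 hx0 c hcV hkey
    intro i
    have hprod : (∏ k ∈ Finset.univ.erase i, b k) ≠ 0 :=
      Finset.prod_ne_zero_iff.mpr fun k _ => hb0 k
    have hai : a i = 0 := by
      have := hc0 i
      rw [hcapp i] at this
      rcases mul_eq_zero.mp this with h' | h'
      · exact h'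
      · exact absurd h' hprod
    have : (g i : K) * φ (b i) = 0 := by rw [heq i, hai, map_zero]
    rcases mul_eq_zero.mp this with h' | h'
    · exact Subtype.ext h'
    · exact absurd h' (hbne i)
  -- conclude
  refine ⟨⟨Module.Basis.mk hli hspan, fun i => Module.Basis.mk_apply hli hspan i⟩, ?_⟩
  rw [Module.finrank_eq_card_basis (Module.Basis.mk hli hspan), Fintype.card_fin]
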